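/- Let K be a measurable space, F a separable real normed vector space, and f ↦ ν_f an energy-measure assignment on (F, K). Let ν be a minimal energy-dominant measure and B a measurable subset of K. Then ν(B) = 0 if and only if ν_f(B) = 0 for every f ∈ F. -/

import Mathlib

open MeasureTheory

/-- The mutual measure value `ν_{f,g}(B) := (ν_{f+g}(B) − ν_f(B) − ν_g(B))/2`. -/
noncomputable def mutualEM {F K : Type*} [MeasurableSpace K] [Add F]
    (em : F → Measure K) (f g : F) (B : Set K) : ℝ :=
  ((em (f + g) B).toReal - (em f B).toReal - (em g B).toReal) / 2

/-- An energy-measure assignment on `(F, K)`: each `f : F` is assigned a finite measure `ν_f`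
on `K` such that (a) for every measurable `B`, `(f, g) ↦ ν_{f,g}(B)` is a (symmetric) bilinear
form on `F`, and (b) `(√(ν_f B) − √(ν_g B))² ≤ ν_{f−g}(B) ≤ 2‖f − g‖²` for all measurable `B`.
(Symmetry of the mutual form is automatic from its definition.) -/
structure EnergyMeasureAssignment (F K : Type*) [MeasurableSpace K]
    [NormedAddCommGroup F] [NormedSpace ℝ F] where
  em : F → Measure K
  finite : ∀ f, IsFiniteMeasure (em f)
  add_left : ∀ (f₁ f₂ g : F) (B : Set K), MeasurableSet B →
    mutualEM em (f₁ + f₂) g B = mutualEM em f₁ g B + mutualEM em f₂ g B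
  smul_left : ∀ (c : ℝ) (f g : F) (B : Set K), MeasurableSet B →
    mutualEM em (c • f) g B = c * mutualEM em f g B
  sqrt_diff_le : ∀ (f g : F) (B : Set K), MeasurableSet B →
    (Real.sqrt (em f B).toReal - Real.sqrt (em g B).toReal) ^ 2 ≤ (em (f - g) B).toReal
  le_norm : ∀ (f g : F) (B : Set K), MeasurableSet B →
    (em (f - g) B).toReal ≤ 2 * ‖f - g‖ ^ 2

/-- `ν` is a minimal energy-dominant measure: it is σ-finite, dominates every energy measure,
and is absolutely continuous with respect to any other σ-finite measure that does so. -/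
def IsMinimalEnergyDominant {F K : Type*} [MeasurableSpace K]
    [NormedAddCommGroup F] [NormedSpace ℝ F]
    (E : EnergyMeasureAssignment F K) (ν : Measure K) : Prop :=
  SigmaFinite ν ∧ (∀ f, E.em f ≪ ν) ∧
    ∀ ν' : Measure K, SigmaFinite ν' → (∀ f, E.em f ≪ ν') → ν ≪ ν'

/-- Lemma 2.4 of the paper: for a minimal energy-dominant measure `ν` and a measurable set `B`,
`ν(B) = 0` iff `ν_f(B) = 0` for every `f ∈ F`. -/
theorem stmt9 {F K : Type*} [MeasurableSpace K] [NormedAddCommGroup F] [NormedSpace ℝ F]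
    [TopologicalSpace.SeparableSpace F]
    (E : EnergyMeasureAssignment F K) (ν : Measure K)
    (hν : IsMinimalEnergyDominant E ν)
    (B : Set K) (hB : MeasurableSet B) :
    ν B = 0 ↔ ∀ f : F, E.em f B = 0 := by
  obtain ⟨hσ, hdom, hmin⟩ := hν
  constructor
  · intro h f
    exact hdom f h
  · intro h
    haveI := hσ
    have hac : ∀ f, E.em f ≪ ν.restrict Bᶜ := by
      intro f A hA
      rw [Measure.restrict_apply' hB.compl] at hA
      have h1 : E.em f (A ∩ Bᶜ) = 0 := hdom f hA
      have h2 : E.em f (A ∩ B) = 0 :=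
        le_antisymm ((measure_mono Set.inter_subset_right).trans (h f).le) (zero_le)
      have h3 : E.em f A ≤ E.em f (A ∩ B) + E.em f (A \ B) :=
        measure_le_inter_add_diff _ _ _
      rw [Set.diff_eq, h1, h2, add_zero] at h3
      exact le_antisymm h3 (zero_le)
    have := hmin (ν.restrict Bᶜ) inferInstance hac
    apply this
    rw [Measure.restrict_apply' hB.compl]
    simp
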